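/- Let A be a unital C*-algebra, v ∈ A a unitary, and c, s ∈ A commuting positive contractions with c² + s² = 1; let r := √(cs) be the positive square root of cs. Suppose η ≥ 0 satisfies ‖cv − vc‖ ≤ η, ‖sv − vs‖ ≤ η and ‖rv − vr‖ ≤ η, and let ε be a real number with 0 < ε < (8/237)(√1393 − 34) and η < ε/2. Consider the 2×2 matrices over A: e := [[s², r v r],[r v* r, c²]] and ě := [[s², c s v],[c s v*, c²]]. Then: (1) e is self-adjoint and ‖e² − e‖ ≤ 2η < ε (so e is an ε-quasi-projection); (2) ‖e − ě‖ ≤ (√2/2)·η < (√2/4)·ε; (3) for every θ ∈ [0,1] the element (1−θ)·ě + θ·e satisfies ‖((1−θ)ě+θe)² − ((1−θ)ě+θe)‖ < 1/4 (so ě and e are homotopic via quasi-idempotents). -/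

import Mathlib

open scoped NNReal

section QPaux

variable {A B : Type*} [CStarAlgebra A] [PartialOrder A] [StarOrderedRing A] [CStarAlgebra B]

lemma QPaux.sq_le {a b : ℝ} (ha : 0 ≤ a) (hb : 0 ≤ b) (h : a * a ≤ b * b) : a ≤ b := by
  nlinarith [sq_nonneg (a - b), sq_nonneg (a + b)]

lemma QPaux.commute_of_mem_elemental {A : Type*} [CStarAlgebra A] {x b : A} {y : A}
    (hy : y ∈ StarAlgebra.elemental ℂ x) (h1 : Commute b x) (h2 : Commute b (star x)) :
    Commute b y := by
  induction hy using StarAlgebra.elemental.induction_on with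
  | self => exact h1
  | star_self => exact h2
  | algebraMap r => exact (Algebra.commutes r b).symm
  | add u hu v hv pu pv => exact pu.add_right pv
  | mul u hu v hv pu pv => exact pu.mul_right pv
  | closure s hs hmem v hv =>
      have hcl : closure s ⊆ {z : A | b * z = z * b} := by
        refine closure_minimal (fun z hz => hmem z hz) ?_
        exact isClosed_eq (by fun_prop) (by fun_prop)
      exact hcl hv

lemma QPaux.sqrt_mem_elemental {x : A} (hx : 0 ≤ x) :
    CFC.sqrt x ∈ StarAlgebra.elemental ℂ x := by
  have hsa : IsSelfAdjoint x := .of_nonneg hx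
  have hnormal : IsStarNormal x := hsa.isStarNormal
  have h1 : CFC.sqrt x = cfc (fun z : ℝ => ((NNReal.sqrt z.toNNReal : ℝ≥0) : ℝ)) x := by
    rw [CFC.sqrt_eq_cfc, cfc_nnreal_eq_real _ x hx]
  have h2 : CFC.sqrt x
      = cfc (fun z : ℂ => (((NNReal.sqrt (z.re.toNNReal) : ℝ≥0) : ℝ) : ℂ)) x := by
    rw [h1, cfc_real_eq_complex]
  rw [h2]
  by_cases hcont : ContinuousOn (fun z : ℂ => (((NNReal.sqrt (z.re.toNNReal) : ℝ≥0) : ℝ) : ℂ))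
      (spectrum ℂ x)
  · rw [cfc_apply _ x hnormal hcont, cfcHom_eq_of_isStarNormal]
    exact Subtype.coe_prop _
  · rw [cfc_apply_of_not_continuousOn x hcont]
    exact zero_mem _

lemma QPaux.commute_sqrt {x b : A} (hx : 0 ≤ x) (h : Commute b x) :
    Commute b (CFC.sqrt x) :=
  QPaux.commute_of_mem_elemental (QPaux.sqrt_mem_elemental hx) h
    (by rwa [(IsSelfAdjoint.of_nonneg hx).star_eq])

lemma QPaux.algebraMap_nonneg {t : ℝ} (ht : 0 ≤ t) : (0:A) ≤ algebraMap ℝ A t := by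
  have hsa : star (algebraMap ℝ A (Real.sqrt t)) = algebraMap ℝ A (Real.sqrt t) := by
    rw [Algebra.algebraMap_eq_smul_one, star_smul, star_one, star_trivial]
  have : algebraMap ℝ A t
      = star (algebraMap ℝ A (Real.sqrt t)) * algebraMap ℝ A (Real.sqrt t) := by
    rw [hsa, ← map_mul, Real.mul_self_sqrt ht]
  rw [this]
  exact star_mul_self_nonneg _

lemma QPaux.fin_two_sub (a b c d a' b' c' d' : A) :
    !![a,b;c,d] - !![a',b';c',d'] = !![a-a', b-b'; c-c', d-d'] := by
  ext i j; fin_cases i <;> fin_cases j <;> simp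

lemma QPaux.diag_star_mul (x y : A) :
    star (!![x,0;0,y]) * !![x,0;0,y] = !![star x * x, 0; 0, star y * y] := by
  have hstar : star (!![x,0;0,y]) = !![star x, 0; 0, star y] := by
    ext i j; fin_cases i <;> fin_cases j <;> simp [Matrix.star_apply]
  rw [hstar, Matrix.mul_fin_two]
  norm_num

variable (ι : Matrix (Fin 2) (Fin 2) A →⋆ₐ[ℂ] B)

lemma QPaux.iota_diag_nonneg {p q : A} (hp : 0 ≤ p) (hq : 0 ≤ q) :
    letI : PartialOrder B := CStarAlgebra.spectralOrder B
    (0:B) ≤ ι !![p,0;0,q] := by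
  letI : PartialOrder B := CStarAlgebra.spectralOrder B
  letI : StarOrderedRing B := CStarAlgebra.spectralOrderedRing B
  have hpd : star (CFC.sqrt p) * CFC.sqrt p = p := by
    rw [(IsSelfAdjoint.of_nonneg (CFC.sqrt_nonneg (a := p))).star_eq, CFC.sqrt_mul_sqrt_self p hp]
  have hqd : star (CFC.sqrt q) * CFC.sqrt q = q := by
    rw [(IsSelfAdjoint.of_nonneg (CFC.sqrt_nonneg (a := q))).star_eq, CFC.sqrt_mul_sqrt_self q hq]
  have key : !![p,0;0,q]
      = star (!![CFC.sqrt p,0;0,CFC.sqrt q]) * !![CFC.sqrt p,0;0,CFC.sqrt q] := by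
    rw [QPaux.diag_star_mul, hpd, hqd]
  rw [key, map_mul, map_star]
  exact star_mul_self_nonneg _

lemma QPaux.iota_diag_pos_norm_le {p q : A} (hp : 0 ≤ p) (hq : 0 ≤ q) :
    ‖ι !![p,0;0,q]‖ ≤ max ‖p‖ ‖q‖ := by
  letI : PartialOrder B := CStarAlgebra.spectralOrder B
  letI : StarOrderedRing B := CStarAlgebra.spectralOrderedRing B
  set m : ℝ := max ‖p‖ ‖q‖ with hm
  have hm0 : 0 ≤ m := le_max_of_le_left (norm_nonneg p)
  rw [CStarAlgebra.norm_le_iff_le_algebraMap _ hm0 (QPaux.iota_diag_nonneg ι hp hq)]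
  have halg : algebraMap ℝ B m = ι (algebraMap ℂ (Matrix (Fin 2) (Fin 2) A) (m:ℂ)) := by
    rw [AlgHomClass.commutes ι ((m:ℂ)), IsScalarTower.algebraMap_apply ℝ ℂ B]
    norm_num
  have hmA : algebraMap ℝ A m = algebraMap ℂ A (m:ℂ) := by
    rw [IsScalarTower.algebraMap_apply ℝ ℂ A]; norm_num
  have hmat : algebraMap ℂ (Matrix (Fin 2) (Fin 2) A) (m:ℂ)
      = !![algebraMap ℝ A m, 0; 0, algebraMap ℝ A m] := by
    rw [hmA]
    ext i j
    fin_cases i <;> fin_cases j <;> simp [Matrix.algebraMap_matrix_apply]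
  have hsub : algebraMap ℂ (Matrix (Fin 2) (Fin 2) A) (m:ℂ) - !![p,0;0,q]
      = !![algebraMap ℝ A m - p, 0; 0, algebraMap ℝ A m - q] := by
    rw [hmat]
    ext i j; fin_cases i <;> fin_cases j <;> simp
  have hmono : ∀ t : ℝ, t ≤ m → algebraMap ℝ A t ≤ algebraMap ℝ A m := by
    intro t htm
    have := QPaux.algebraMap_nonneg (A := A) (sub_nonneg.mpr htm)
    rw [map_sub] at this
    exact sub_nonneg.mp this
  have hple : p ≤ algebraMap ℝ A m :=
    le_trans (IsSelfAdjoint.le_algebraMap_norm_self (.of_nonneg hp))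
      (hmono _ (le_max_left _ _))
  have hqle : q ≤ algebraMap ℝ A m :=
    le_trans (IsSelfAdjoint.le_algebraMap_norm_self (.of_nonneg hq))
      (hmono _ (le_max_right _ _))
  have hfin : (0:B) ≤ ι (algebraMap ℂ (Matrix (Fin 2) (Fin 2) A) (m:ℂ) - !![p,0;0,q]) := by
    rw [hsub]
    exact QPaux.iota_diag_nonneg ι (sub_nonneg.mpr hple) (sub_nonneg.mpr hqle)
  rw [map_sub, ← halg] at hfin
  exact sub_nonneg.mp hfin

lemma QPaux.iota_norm_sq (x : Matrix (Fin 2) (Fin 2) A) :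
    ‖ι x‖ * ‖ι x‖ = ‖ι (star x * x)‖ := by
  rw [map_mul, map_star, CStarRing.norm_star_mul_self]

lemma QPaux.iota_diag_norm_le (x y : A) : ‖ι !![x,0;0,y]‖ ≤ max ‖x‖ ‖y‖ := by
  have h1 := QPaux.iota_norm_sq ι !![x,0;0,y]
  rw [QPaux.diag_star_mul] at h1
  have h2 : ‖ι !![star x * x, 0; 0, star y * y]‖ ≤ max (‖x‖*‖x‖) (‖y‖*‖y‖) := by
    have := QPaux.iota_diag_pos_norm_le ι (star_mul_self_nonneg x) (star_mul_self_nonneg y)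
    simpa [CStarRing.norm_star_mul_self] using this
  refine QPaux.sq_le (norm_nonneg _) (le_max_of_le_left (norm_nonneg x)) ?_
  rw [h1]
  refine h2.trans ?_
  have hx0 := norm_nonneg x; have hy0 := norm_nonneg y
  rcases le_total ‖x‖ ‖y‖ with h | h
  · rw [max_eq_right h, max_eq_right (by nlinarith : ‖x‖*‖x‖ ≤ ‖y‖*‖y‖)]
  · rw [max_eq_left h, max_eq_left (by nlinarith : ‖y‖*‖y‖ ≤ ‖x‖*‖x‖)]

lemma QPaux.iota_antidiag_norm_le (x y : A) : ‖ι !![0,x;y,0]‖ ≤ max ‖x‖ ‖y‖ := by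
  have hW : ‖ι !![(0:A),1;1,0]‖ ≤ 1 := by
    have h1 := QPaux.iota_norm_sq ι !![(0:A),1;1,0]
    have hsq : star (!![(0:A),1;1,0]) * !![(0:A),1;1,0] = 1 := by
      have hstar : star (!![(0:A),1;1,0]) = !![(0:A),1;1,0] := by
        ext i j; fin_cases i <;> fin_cases j <;> simp [Matrix.star_apply]
      rw [hstar, Matrix.mul_fin_two]
      norm_num
      ext i j; fin_cases i <;> fin_cases j <;> simp [Matrix.one_apply]
    rw [hsq, map_one] at h1
    have hone : ‖(1:B)‖ ≤ 1 := by
      have h : ‖star (1:B) * 1‖ = ‖(1:B)‖ * ‖(1:B)‖ := CStarRing.norm_star_mul_self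
      rw [star_one, one_mul] at h
      nlinarith [norm_nonneg (1:B)]
    refine QPaux.sq_le (norm_nonneg _) zero_le_one ?_
    rw [h1]; linarith
  have hfact : !![(0:A),x;y,0] = !![x,0;0,y] * !![(0:A),1;1,0] := by
    rw [Matrix.mul_fin_two]; norm_num
  calc ‖ι !![(0:A),x;y,0]‖ = ‖ι !![x,0;0,y] * ι !![(0:A),1;1,0]‖ := by rw [hfact, map_mul]
    _ ≤ ‖ι !![x,0;0,y]‖ * ‖ι !![(0:A),1;1,0]‖ := norm_mul_le _ _
    _ ≤ (max ‖x‖ ‖y‖) * 1 := by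
        refine mul_le_mul (QPaux.iota_diag_norm_le ι x y) hW (norm_nonneg _)
          (le_max_of_le_left (norm_nonneg x))
    _ = max ‖x‖ ‖y‖ := mul_one _

lemma QPaux.iota_matrix_norm_le (a b c d : A) :
    ‖ι !![a,b;c,d]‖ ≤ max ‖a‖ ‖d‖ + max ‖b‖ ‖c‖ := by
  have hdecomp : !![a,b;c,d] = !![a,0;0,d] + !![(0:A),b;c,0] := by
    ext i j; fin_cases i <;> fin_cases j <;> simp
  calc ‖ι !![a,b;c,d]‖ = ‖ι !![a,0;0,d] + ι !![(0:A),b;c,0]‖ := by rw [hdecomp, map_add]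
    _ ≤ ‖ι !![a,0;0,d]‖ + ‖ι !![(0:A),b;c,0]‖ := norm_add_le _ _
    _ ≤ max ‖a‖ ‖d‖ + max ‖b‖ ‖c‖ :=
        add_le_add (QPaux.iota_diag_norm_le ι a d) (QPaux.iota_antidiag_norm_le ι b c)

end QPaux

set_option maxHeartbeats 4000000 in
/-- Let `v` be a unitary in a unital C*-algebra `A`, let `c, s` be commuting
positive contractions with `c² + s² = 1`, and let `r` be the positive square root of `c·s`
(characterized by `0 ≤ r` and `r² = c·s`).  Suppose `η ≥ 0` bounds the commutators
`‖cv − vc‖`, `‖sv − vs‖`, `‖rv − vr‖`, and `0 < ε < (8/237)(√1393 − 34)`, `η < ε/2`.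
In `M₂(A)` (realized inside a C*-algebra `B` via an injective ⋆-algebra homomorphism `ι`,
which is automatically isometric, so `‖ι x‖` is the C*-norm of `x ∈ M₂(A)`), consider
`e := [[s², r v r],[r v* r, c²]]` and `ě := [[s², c s v],[c s v*, c²]]`.  Then:
(1) `e` is self-adjoint and `‖e² − e‖ ≤ 2η < ε` (so `e` is an `ε`-quasi-projection);
(2) `‖e − ě‖ ≤ (√2/2)η < (√2/4)ε`;
(3) every point of the straight-line path from `ě` to `e` is a quasi-idempotent. -/
theorem quasiProjection_representative
    {A B : Type*} [CStarAlgebra A] [PartialOrder A] [StarOrderedRing A] [CStarAlgebra B]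
    (ι : Matrix (Fin 2) (Fin 2) A →⋆ₐ[ℂ] B) (hι : Function.Injective ι)
    (v : A) (hv : v ∈ unitary A)
    (c s r : A) (hc : 0 ≤ c) (hs : 0 ≤ s) (hc1 : ‖c‖ ≤ 1) (hs1 : ‖s‖ ≤ 1)
    (hcomm : c * s = s * c) (hcs : c ^ 2 + s ^ 2 = 1)
    (hr : 0 ≤ r) (hr2 : r ^ 2 = c * s)
    (η ε : ℝ) (hη : 0 ≤ η)
    (h1 : ‖c * v - v * c‖ ≤ η) (h2 : ‖s * v - v * s‖ ≤ η)
    (h3 : ‖r * v - v * r‖ ≤ η)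
    (hε : 0 < ε) (hε' : ε < 8 / 237 * (Real.sqrt 1393 - 34)) (hηε : η < ε / 2) :
    let e : Matrix (Fin 2) (Fin 2) A := !![s ^ 2, r * v * r; r * star v * r, c ^ 2]
    let eCk : Matrix (Fin 2) (Fin 2) A := !![s ^ 2, c * s * v; c * s * star v, c ^ 2]
    (IsSelfAdjoint e ∧ ‖ι (e ^ 2 - e)‖ ≤ 2 * η ∧ 2 * η < ε) ∧
    (‖ι (e - eCk)‖ ≤ Real.sqrt 2 / 2 * η ∧
      Real.sqrt 2 / 2 * η < Real.sqrt 2 / 4 * ε) ∧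
    ∀ θ : ℝ, θ ∈ Set.Icc (0 : ℝ) 1 →
      ‖ι (((1 - θ) • eCk + θ • e) ^ 2 - ((1 - θ) • eCk + θ • e))‖ < 1 / 4 := by
  intro e eCk
  obtain ⟨hv1, hv2⟩ := Unitary.mem_iff.mp hv
  have hcsa : IsSelfAdjoint c := .of_nonneg hc
  have hssa : IsSelfAdjoint s := .of_nonneg hs
  have hrsa : IsSelfAdjoint r := .of_nonneg hr
  set w : ℝ := Real.sqrt 2 with hw
  have hw2 : w * w = 2 := Real.mul_self_sqrt (by norm_num)
  have hw0 : 0 ≤ w := Real.sqrt_nonneg 2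
  have hw14 : w ≤ 1.41422 := by nlinarith only [hw2, sq_nonneg (w - 1.41422)]
  -- norms of v and star v
  have honeA : ‖(1:A)‖ ≤ 1 := by
    have h : ‖star (1:A) * 1‖ = ‖(1:A)‖ * ‖(1:A)‖ := CStarRing.norm_star_mul_self
    rw [star_one, one_mul] at h
    nlinarith [norm_nonneg (1:A)]
  have hvn : ‖v‖ ≤ 1 := by
    refine QPaux.sq_le (norm_nonneg v) zero_le_one ?_
    calc ‖v‖ * ‖v‖ = ‖star v * v‖ := (CStarRing.norm_star_mul_self).symm
      _ = ‖(1:A)‖ := by rw [hv1]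
      _ ≤ 1 * 1 := by simpa using honeA
  have hv'n : ‖star v‖ ≤ 1 := by rwa [norm_star]
  -- square root facts
  have hrr : r * r = c * s := by rw [← hr2, pow_two]
  have hcs_star : c * s = star r * r := by rw [← hrr, hrsa.star_eq]
  have hcs_nonneg : 0 ≤ c * s := hcs_star ▸ star_mul_self_nonneg r
  have hsqrt : CFC.sqrt (c * s) = r := CFC.sqrt_unique hrr hr
  have Hcr : Commute c r :=
    hsqrt ▸ QPaux.commute_sqrt hcs_nonneg ((Commute.refl c).mul_right (hcomm : Commute c s))
  have Hsr : Commute s r :=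
    hsqrt ▸ QPaux.commute_sqrt hcs_nonneg
      ((show Commute s c from hcomm.symm).mul_right (Commute.refl s))
  -- ‖r‖² ≤ 1/2
  have hcs_half : ‖c * s‖ ≤ 1 / 2 := by
    rw [CStarAlgebra.norm_le_iff_le_algebraMap _ (by norm_num) hcs_nonneg]
    have hx : (c - s) * (c - s) = c ^ 2 + s ^ 2 - (c * s + c * s) := by
      rw [sub_mul, mul_sub, mul_sub, ← hcomm, pow_two, pow_two]; abel
    have hpos : (0:A) ≤ (1/2 : ℝ) • ((c - s) * (c - s)) := by
      refine smul_nonneg (by norm_num) ?_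
      have h' : (c - s) * (c - s) = star (c - s) * (c - s) := by rw [(hcsa.sub hssa).star_eq]
      rw [h']; exact star_mul_self_nonneg _
    have heq : algebraMap ℝ A (1/2) - c * s = (1/2 : ℝ) • ((c - s) * (c - s)) := by
      rw [hx, Algebra.algebraMap_eq_smul_one, ← hcs]
      module
    exact sub_nonneg.mp (heq ▸ hpos)
  have hrn2 : ‖r‖ * ‖r‖ ≤ 1 / 2 := by
    calc ‖r‖ * ‖r‖ = ‖star r * r‖ := (CStarRing.norm_star_mul_self).symm
      _ = ‖c * s‖ := by rw [← hcs_star]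
      _ ≤ 1 / 2 := hcs_half
  have hrn : ‖r‖ ≤ w / 2 := by
    refine QPaux.sq_le (norm_nonneg r) (by positivity) ?_
    linarith only [hrn2, hw2]
  -- commutator norms
  have hvr : ‖v * r - r * v‖ ≤ η := by rw [norm_sub_rev]; exact h3
  have hrv' : ‖r * star v - star v * r‖ ≤ η := by
    have hst : r * star v - star v * r = star (v * r - r * v) := by
      simp only [star_sub, star_mul, star_star, hrsa.star_eq]
    rw [hst, norm_star, norm_sub_rev]
    exact h3
  have hv'r : ‖star v * r - r * star v‖ ≤ η := by rw [norm_sub_rev]; exact hrv'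
  have hcv' : ‖c * star v - star v * c‖ ≤ η := by
    have hst : c * star v - star v * c = star (v * c - c * v) := by
      simp only [star_sub, star_mul, star_star, hcsa.star_eq]
    rw [hst, norm_star, norm_sub_rev]
    exact h1
  have hcs_v : ‖(c * s) * v - v * (c * s)‖ ≤ 2 * (‖r‖ * η) := by
    rw [← hrr]
    have hid : (r * r) * v - v * (r * r) = r * (r * v - v * r) + (r * v - v * r) * r := by
      noncomm_ring
    calc ‖(r * r) * v - v * (r * r)‖ ≤ ‖r * (r * v - v * r)‖ + ‖(r * v - v * r) * r‖ := by
          rw [hid]; exact norm_add_le _ _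
      _ ≤ ‖r‖ * ‖r * v - v * r‖ + ‖r * v - v * r‖ * ‖r‖ :=
          add_le_add (norm_mul_le _ _) (norm_mul_le _ _)
      _ ≤ 2 * (‖r‖ * η) := by
          nlinarith [mul_le_mul_of_nonneg_left h3 (norm_nonneg r)]
  have hcs_v' : ‖(c * s) * star v - star v * (c * s)‖ ≤ 2 * (‖r‖ * η) := by
    rw [← hrr]
    have hid : (r * r) * star v - star v * (r * r)
        = r * (r * star v - star v * r) + (r * star v - star v * r) * r := by
      noncomm_ring
    calc ‖(r * r) * star v - star v * (r * r)‖
        ≤ ‖r * (r * star v - star v * r)‖ + ‖(r * star v - star v * r) * r‖ := by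
          rw [hid]; exact norm_add_le _ _
      _ ≤ ‖r‖ * ‖r * star v - star v * r‖ + ‖r * star v - star v * r‖ * ‖r‖ :=
          add_le_add (norm_mul_le _ _) (norm_mul_le _ _)
      _ ≤ 2 * (‖r‖ * η) := by
          nlinarith [mul_le_mul_of_nonneg_left hrv' (norm_nonneg r)]
  have hs2v : ‖s ^ 2 * v - v * s ^ 2‖ ≤ 2 * η := by
    have hid : s ^ 2 * v - v * s ^ 2 = s * (s * v - v * s) + (s * v - v * s) * s := by
      noncomm_ring
    calc ‖s ^ 2 * v - v * s ^ 2‖ ≤ ‖s * (s * v - v * s)‖ + ‖(s * v - v * s) * s‖ := by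
          rw [hid]; exact norm_add_le _ _
      _ ≤ ‖s‖ * ‖s * v - v * s‖ + ‖s * v - v * s‖ * ‖s‖ :=
          add_le_add (norm_mul_le _ _) (norm_mul_le _ _)
      _ ≤ 2 * η := by
          nlinarith [mul_le_mul hs1 h2 (norm_nonneg _) zero_le_one,
            mul_le_mul h2 hs1 (norm_nonneg s) hη]
  have hc2v' : ‖c ^ 2 * star v - star v * c ^ 2‖ ≤ 2 * η := by
    have hid : c ^ 2 * star v - star v * c ^ 2
        = c * (c * star v - star v * c) + (c * star v - star v * c) * c := by
      noncomm_ring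
    calc ‖c ^ 2 * star v - star v * c ^ 2‖
        ≤ ‖c * (c * star v - star v * c)‖ + ‖(c * star v - star v * c) * c‖ := by
          rw [hid]; exact norm_add_le _ _
      _ ≤ ‖c‖ * ‖c * star v - star v * c‖ + ‖c * star v - star v * c‖ * ‖c‖ :=
          add_le_add (norm_mul_le _ _) (norm_mul_le _ _)
      _ ≤ 2 * η := by
          nlinarith [mul_le_mul hc1 hcv' (norm_nonneg _) zero_le_one,
            mul_le_mul hcv' hc1 (norm_nonneg c) hη]
  -- the four entry identities
  have K1 : (c*s)*(c*s) = c^2*s^2 := by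
    calc (c*s)*(c*s) = c*(s*c)*s := by noncomm_ring
      _ = c*(c*s)*s := by rw [← hcomm]
      _ = c^2*s^2 := by noncomm_ring
  have K2 : r*(c*s)*r = c^2*s^2 := by
    rw [← hrr]
    calc r*(r*r)*r = (r*r)*(r*r) := by noncomm_ring
      _ = (c*s)*(c*s) := by rw [hrr]
      _ = c^2*s^2 := K1
  have A11 : s^2*s^2 + r*v*r*(r*star v*r) - s^2
      = r * ((v*(c*s) - (c*s)*v) * (star v * r)) := by
    have e1 : r*v*r*(r*star v*r) = r*(v*(c*s))*(star v*r) := by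
      rw [← hrr]; noncomm_ring
    have e2 : r * ((c*s)*v) * (star v*r) = c^2*s^2 := by
      calc r * ((c*s)*v) * (star v*r) = r*(c*s)*(v*star v)*r := by noncomm_ring
        _ = r*(c*s)*1*r := by rw [hv2]
        _ = r*(c*s)*r := by noncomm_ring
        _ = c^2*s^2 := K2
    have hkey : c^2*s^2 + s^2*s^2 = s^2 := by
      have h := congrArg (· * s^2) hcs
      simpa [add_mul] using h
    have e3 : r * ((v*(c*s) - (c*s)*v) * (star v * r))
        = r*(v*(c*s))*(star v*r) - r*((c*s)*v)*(star v*r) := by noncomm_ring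
    rw [e1, e3, e2, ← sub_eq_zero]
    calc s ^ 2 * s ^ 2 + r * (v * (c * s)) * (star v * r) - s ^ 2
          - (r * (v * (c * s)) * (star v * r) - c ^ 2 * s ^ 2)
        = (c ^ 2 * s ^ 2 + s ^ 2 * s ^ 2) - s ^ 2 := by noncomm_ring
      _ = 0 := by rw [hkey]; exact sub_self _
  have A22 : r*star v*r*(r*v*r) + c^2*c^2 - c^2
      = r * ((star v*(c*s) - (c*s)*star v) * (v * r)) := by
    have e1 : r*star v*r*(r*v*r) = r*(star v*(c*s))*(v*r) := by
      rw [← hrr]; noncomm_ring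
    have e2 : r * ((c*s)*star v) * (v*r) = c^2*s^2 := by
      calc r * ((c*s)*star v) * (v*r) = r*(c*s)*(star v*v)*r := by noncomm_ring
        _ = r*(c*s)*1*r := by rw [hv1]
        _ = r*(c*s)*r := by noncomm_ring
        _ = c^2*s^2 := K2
    have hkey : c^2*c^2 + c^2*s^2 = c^2 := by
      have h := congrArg (c^2 * ·) hcs
      simpa [mul_add] using h
    have e3 : r * ((star v*(c*s) - (c*s)*star v) * (v * r))
        = r*(star v*(c*s))*(v*r) - r*((c*s)*star v)*(v*r) := by noncomm_ring
    rw [e1, e3, e2, ← sub_eq_zero]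
    calc r * (star v * (c * s)) * (v * r) + c ^ 2 * c ^ 2 - c ^ 2
          - (r * (star v * (c * s)) * (v * r) - c ^ 2 * s ^ 2)
        = (c ^ 2 * c ^ 2 + c ^ 2 * s ^ 2) - c ^ 2 := by noncomm_ring
      _ = 0 := by rw [hkey]; exact sub_self _
  have A12 : s^2*(r*v*r) + r*v*r*c^2 - r*v*r = r*(s^2*v - v*s^2)*r := by
    have m1 : s^2*(r*v*r) = r*(s^2*v)*r := by
      calc s^2*(r*v*r) = (s^2*r)*(v*r) := by noncomm_ring
        _ = (r*s^2)*(v*r) := by rw [(Hsr.pow_left 2).eq]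
        _ = r*(s^2*v)*r := by noncomm_ring
    have m2 : r*v*r*c^2 = r*(v*c^2)*r := by
      calc r*v*r*c^2 = (r*v)*(r*c^2) := by noncomm_ring
        _ = (r*v)*(c^2*r) := by rw [(Hcr.symm.pow_right 2).eq]
        _ = r*(v*c^2)*r := by noncomm_ring
    have hc2 : c^2 = 1 - s^2 := by rw [← hcs]; abel
    rw [m1, m2]
    calc r*(s^2*v)*r + r*(v*c^2)*r - r*v*r = r*(s^2*v + v*c^2 - v)*r := by noncomm_ring
      _ = r*(s^2*v - v*s^2)*r := by rw [hc2]; noncomm_ring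
  have A21 : r*star v*r*s^2 + c^2*(r*star v*r) - r*star v*r
      = r*(c^2*star v - star v*c^2)*r := by
    have m1 : r*star v*r*s^2 = r*(star v*s^2)*r := by
      calc r*star v*r*s^2 = (r*star v)*(r*s^2) := by noncomm_ring
        _ = (r*star v)*(s^2*r) := by rw [(Hsr.pow_left 2).eq.symm]
        _ = r*(star v*s^2)*r := by noncomm_ring
    have m2 : c^2*(r*star v*r) = r*(c^2*star v)*r := by
      calc c^2*(r*star v*r) = (c^2*r)*(star v*r) := by noncomm_ring
        _ = (r*c^2)*(star v*r) := by rw [(Hcr.pow_left 2).eq]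
        _ = r*(c^2*star v)*r := by noncomm_ring
    have hs2 : s^2 = 1 - c^2 := by rw [← hcs]; abel
    rw [m1, m2]
    calc r*(star v*s^2)*r + r*(c^2*star v)*r - r*star v*r
        = r*(c^2*star v + star v*s^2 - star v)*r := by noncomm_ring
      _ = r*(c^2*star v - star v*c^2)*r := by rw [hs2]; noncomm_ring
  -- e² - e explicitly
  have heSub : (!![s ^ 2, r * v * r; r * star v * r, c ^ 2]) ^ 2
        - !![s ^ 2, r * v * r; r * star v * r, c ^ 2]
      = !![r * ((v*(c*s) - (c*s)*v) * (star v * r)), r*(s^2*v - v*s^2)*r;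
           r*(c^2*star v - star v*c^2)*r, r * ((star v*(c*s) - (c*s)*star v) * (v * r))] := by
    rw [pow_two, Matrix.mul_fin_two, QPaux.fin_two_sub, A11, A12, A21, A22]
  -- entry norm bounds
  have n11 : ‖r * ((v*(c*s) - (c*s)*v) * (star v * r))‖ ≤ w/2 * η := by
    have b1 : ‖v*(c*s) - (c*s)*v‖ ≤ 2*(‖r‖*η) := by rw [norm_sub_rev]; exact hcs_v
    have b2 : ‖star v * r‖ ≤ 1 * ‖r‖ :=
      le_trans (norm_mul_le _ _) (mul_le_mul_of_nonneg_right hv'n (norm_nonneg r))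
    have c1 : ‖r * ((v*(c*s) - (c*s)*v) * (star v * r))‖
        ≤ ‖r‖ * ((2*(‖r‖*η)) * (1*‖r‖)) := by
      refine le_trans (norm_mul_le _ _) (mul_le_mul_of_nonneg_left ?_ (norm_nonneg r))
      exact le_trans (norm_mul_le _ _) (mul_le_mul b1 b2 (norm_nonneg _) (by positivity))
    have k1 : ‖r‖ * η ≤ w/2 * η := mul_le_mul_of_nonneg_right hrn hη
    have k2 : (‖r‖*‖r‖) * (‖r‖*η) ≤ (1/2) * (w/2*η) :=
      mul_le_mul hrn2 k1 (by positivity) (by norm_num)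
    calc ‖r * ((v*(c*s) - (c*s)*v) * (star v * r))‖ ≤ ‖r‖ * ((2*(‖r‖*η)) * (1*‖r‖)) := c1
      _ = 2 * ((‖r‖*‖r‖) * (‖r‖*η)) := by ring
      _ ≤ 2 * ((1/2) * (w/2*η)) := by linarith
      _ = w/2 * η := by ring
  have n22 : ‖r * ((star v*(c*s) - (c*s)*star v) * (v * r))‖ ≤ w/2 * η := by
    have b1 : ‖star v*(c*s) - (c*s)*star v‖ ≤ 2*(‖r‖*η) := by rw [norm_sub_rev]; exact hcs_v'
    have b2 : ‖v * r‖ ≤ 1 * ‖r‖ :=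
      le_trans (norm_mul_le _ _) (mul_le_mul_of_nonneg_right hvn (norm_nonneg r))
    have c1 : ‖r * ((star v*(c*s) - (c*s)*star v) * (v * r))‖
        ≤ ‖r‖ * ((2*(‖r‖*η)) * (1*‖r‖)) := by
      refine le_trans (norm_mul_le _ _) (mul_le_mul_of_nonneg_left ?_ (norm_nonneg r))
      exact le_trans (norm_mul_le _ _) (mul_le_mul b1 b2 (norm_nonneg _) (by positivity))
    have k1 : ‖r‖ * η ≤ w/2 * η := mul_le_mul_of_nonneg_right hrn hη
    have k2 : (‖r‖*‖r‖) * (‖r‖*η) ≤ (1/2) * (w/2*η) :=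
      mul_le_mul hrn2 k1 (by positivity) (by norm_num)
    calc ‖r * ((star v*(c*s) - (c*s)*star v) * (v * r))‖ ≤ ‖r‖ * ((2*(‖r‖*η)) * (1*‖r‖)) := c1
      _ = 2 * ((‖r‖*‖r‖) * (‖r‖*η)) := by ring
      _ ≤ 2 * ((1/2) * (w/2*η)) := by linarith
      _ = w/2 * η := by ring
  have n12 : ‖r*(s^2*v - v*s^2)*r‖ ≤ η := by
    have c1 : ‖r*(s^2*v - v*s^2)*r‖ ≤ (‖r‖ * ‖s^2*v - v*s^2‖) * ‖r‖ :=
      le_trans (norm_mul_le _ _) (mul_le_mul_of_nonneg_right (norm_mul_le _ _) (norm_nonneg r))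
    have k : (‖r‖*‖r‖) * ‖s^2*v - v*s^2‖ ≤ (1/2) * (2*η) :=
      mul_le_mul hrn2 hs2v (norm_nonneg _) (by norm_num)
    nlinarith [norm_nonneg r, norm_nonneg (s^2*v - v*s^2)]
  have n21 : ‖r*(c^2*star v - star v*c^2)*r‖ ≤ η := by
    have c1 : ‖r*(c^2*star v - star v*c^2)*r‖ ≤ (‖r‖ * ‖c^2*star v - star v*c^2‖) * ‖r‖ :=
      le_trans (norm_mul_le _ _) (mul_le_mul_of_nonneg_right (norm_mul_le _ _) (norm_nonneg r))
    have k : (‖r‖*‖r‖) * ‖c^2*star v - star v*c^2‖ ≤ (1/2) * (2*η) :=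
      mul_le_mul hrn2 hc2v' (norm_nonneg _) (by norm_num)
    nlinarith [norm_nonneg r, norm_nonneg (c^2*star v - star v*c^2)]
  have hEnorm : ‖ι (e ^ 2 - e)‖ ≤ w/2 * η + η := by
    show ‖ι ((!![s ^ 2, r * v * r; r * star v * r, c ^ 2]) ^ 2
      - !![s ^ 2, r * v * r; r * star v * r, c ^ 2])‖ ≤ w/2 * η + η
    rw [heSub]
    refine (QPaux.iota_matrix_norm_le ι _ _ _ _).trans ?_
    exact add_le_add (max_le n11 n22) (max_le n12 n21)
  -- part (1)
  have hesa : IsSelfAdjoint e := by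
    show star (!![s ^ 2, r * v * r; r * star v * r, c ^ 2])
        = !![s ^ 2, r * v * r; r * star v * r, c ^ 2]
    ext i j
    fin_cases i <;> fin_cases j <;>
      simp [Matrix.star_apply, star_pow, star_mul, mul_assoc,
        hcsa.star_eq, hssa.star_eq, hrsa.star_eq]
  have hpart1b : ‖ι (e ^ 2 - e)‖ ≤ 2 * η := by
    refine hEnorm.trans ?_
    nlinarith only [hw14, hη]
  -- part (2)
  have heCkSub : (!![s ^ 2, r * v * r; r * star v * r, c ^ 2] :
        Matrix (Fin 2) (Fin 2) A) - !![s ^ 2, c * s * v; c * s * star v, c ^ 2]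
      = !![0, r*(v*r - r*v); r*(star v*r - r*star v), 0] := by
    rw [QPaux.fin_two_sub]
    have g1 : r * v * r - c * s * v = r*(v*r - r*v) := by rw [← hrr]; noncomm_ring
    have g2 : r * star v * r - c * s * star v = r*(star v*r - r*star v) := by
      rw [← hrr]; noncomm_ring
    rw [g1, g2, sub_self, sub_self]
  have hpart2a : ‖ι (e - eCk)‖ ≤ w / 2 * η := by
    show ‖ι ((!![s ^ 2, r * v * r; r * star v * r, c ^ 2] : Matrix (Fin 2) (Fin 2) A)
      - !![s ^ 2, c * s * v; c * s * star v, c ^ 2])‖ ≤ w / 2 * η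
    rw [heCkSub]
    refine (QPaux.iota_antidiag_norm_le ι _ _).trans ?_
    have nb1 : ‖r*(v*r - r*v)‖ ≤ w/2 * η :=
      le_trans (norm_mul_le _ _) (mul_le_mul hrn hvr (norm_nonneg _) (by positivity))
    have nb2 : ‖r*(star v*r - r*star v)‖ ≤ w/2 * η :=
      le_trans (norm_mul_le _ _) (mul_le_mul hrn hv'r (norm_nonneg _) (by positivity))
    exact max_le nb1 nb2
  have hpart2b : w / 2 * η < w / 4 * ε := by
    have hwpos : 0 < w := Real.sqrt_pos.mpr (by norm_num)
    linarith only [mul_lt_mul_of_pos_left hηε (by positivity : (0:ℝ) < w/2)]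
  refine ⟨⟨hesa, hpart1b, by linarith⟩, ⟨hpart2a, hpart2b⟩, ?_⟩
  -- part (3)
  intro θ hθ
  obtain ⟨hθ0, hθ1⟩ := hθ
  -- numeric bounds on η
  set u : ℝ := Real.sqrt 1393 with hu
  have hu2 : u * u = 1393 := Real.mul_self_sqrt (by norm_num)
  have hu0 : 0 ≤ u := Real.sqrt_nonneg 1393
  have hu37 : u ≤ 37.33 := by nlinarith only [hu2, sq_nonneg (u - 37.33)]
  have hηb : η < 0.05621 := by linarith only [hηε, hε', hu37]
  -- set up the elements of B
  have hsmul : ∀ (t : ℝ) (M : Matrix (Fin 2) (Fin 2) A), t • M = ((t:ℂ)) • M := by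
    intro t M
    ext i j
    simp only [Matrix.smul_apply]
    exact (Complex.coe_smul t (M i j)).symm
  set E : B := ι e with hE
  set K : B := ι eCk with hK
  set D : B := K - E with hD
  set z : ℂ := ((1 - θ : ℝ) : ℂ) with hz
  have hmap : ι (((1 - θ) • eCk + θ • e) ^ 2 - ((1 - θ) • eCk + θ • e))
      = (z • K + (θ:ℂ) • E) * (z • K + (θ:ℂ) • E) - (z • K + (θ:ℂ) • E) := by
    rw [map_sub, map_pow, map_add, hsmul, hsmul, map_smul, map_smul, pow_two]
  have hzθ : z + (θ:ℂ) = 1 := by rw [hz]; push_cast; ring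
  have hGform : z • K + (θ:ℂ) • E = E + z • D := by
    rw [hD]
    have : (θ:ℂ) = 1 - z := by rw [← hzθ]; ring
    rw [this]
    module
  have hexpand : (z • K + (θ:ℂ) • E) * (z • K + (θ:ℂ) • E) - (z • K + (θ:ℂ) • E)
      = (E * E - E) + z • (E * D + D * E - D) + (z * z) • (D * D) := by
    rw [hGform]
    simp only [mul_add, add_mul, smul_mul_assoc, mul_smul_comm, smul_smul]
    module
  -- norms
  have hDn : ‖D‖ ≤ w/2 * η := by
    have : ‖D‖ = ‖ι (e - eCk)‖ := by rw [hD, norm_sub_rev, hE, hK, ← map_sub]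
    rw [this]; exact hpart2a
  clear heSub heCkSub A11 A12 A21 A22 K1 K2 hcs_v hcs_v' hs2v hc2v'
    n11 n22 n12 n21 hvr hrv' hv'r hcv' hcs_half hcs_star hcs_nonneg hsqrt Hcr Hsr
  have hEEn : ‖E * E - E‖ ≤ w/2 * η + η := by
    have hEq : E * E - E = ι (e ^ 2 - e) := by rw [map_sub, map_pow, pow_two]
    rw [hEq]; exact hEnorm
  have hEsa : star E = E := by rw [hE, ← map_star, hesa.star_eq]
  have hEn : ‖E‖ ≤ 1 + 2 * η := by
    have hsq : ‖E‖ * ‖E‖ = ‖E * E‖ := by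
      calc ‖E‖ * ‖E‖ = ‖star E * E‖ := (CStarRing.norm_star_mul_self).symm
        _ = ‖E * E‖ := by rw [hEsa]
    have h' : ‖E * E‖ ≤ ‖E * E - E‖ + ‖E‖ := by
      calc ‖E * E‖ = ‖(E * E - E) + E‖ := by rw [sub_add_cancel]
        _ ≤ ‖E * E - E‖ + ‖E‖ := norm_add_le _ _
    have h'' : ‖E‖ * ‖E‖ ≤ 2 * η + ‖E‖ := by
      rw [hsq]
      refine h'.trans ?_
      have h3' : ‖E * E - E‖ ≤ 2 * η := by
        refine hEEn.trans ?_; nlinarith only [hw14, hη]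
      linarith only [h', h3', hsq ▸ le_refl (‖E‖ * ‖E‖)]
    nlinarith only [h'', norm_nonneg E, sq_nonneg (‖E‖ - 1), hη]
  have hzn : ‖z‖ ≤ 1 := by
    rw [hz, Complex.norm_real, Real.norm_eq_abs, abs_le]
    constructor <;> linarith
  -- final estimate
  rw [hmap, hexpand]
  have t1 : ‖(E * E - E) + z • (E * D + D * E - D) + (z * z) • (D * D)‖
      ≤ ‖E * E - E‖ + ‖z‖ * ‖E * D + D * E - D‖ + (‖z‖ * ‖z‖) * ‖D * D‖ := by
    calc ‖(E * E - E) + z • (E * D + D * E - D) + (z * z) • (D * D)‖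
        ≤ ‖(E * E - E) + z • (E * D + D * E - D)‖ + ‖(z * z) • (D * D)‖ := norm_add_le _ _
      _ ≤ ‖E * E - E‖ + ‖z • (E * D + D * E - D)‖ + ‖(z * z) • (D * D)‖ :=
          add_le_add_left (norm_add_le _ _) _
      _ ≤ ‖E * E - E‖ + ‖z‖ * ‖E * D + D * E - D‖ + (‖z‖ * ‖z‖) * ‖D * D‖ := by
          rw [norm_smul, norm_smul, norm_mul]
  have t2 : ‖E * D + D * E - D‖ ≤ ‖E‖ * ‖D‖ + ‖D‖ * ‖E‖ + ‖D‖ := by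
    calc ‖E * D + D * E - D‖ ≤ ‖E * D + D * E‖ + ‖D‖ := norm_sub_le _ _
      _ ≤ ‖E * D‖ + ‖D * E‖ + ‖D‖ := add_le_add_left (norm_add_le _ _) _
      _ ≤ ‖E‖ * ‖D‖ + ‖D‖ * ‖E‖ + ‖D‖ :=
          add_le_add (add_le_add (norm_mul_le _ _) (norm_mul_le _ _)) le_rfl
  have t3 : ‖D * D‖ ≤ ‖D‖ * ‖D‖ := norm_mul_le _ _
  -- numeric pieces
  have hd0 : (0:ℝ) ≤ ‖D‖ := norm_nonneg D
  have hdnum : ‖D‖ ≤ 0.0398 := by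
    refine hDn.trans ?_
    linarith only [mul_le_mul hw14 (le_of_lt hηb) hη (by norm_num : (0:ℝ) ≤ 1.41422)]
  have hxnum : ‖E‖ ≤ 1.11242 := by
    refine hEn.trans ?_; linarith only [hηb]
  have hx0 : (0:ℝ) ≤ ‖E‖ := norm_nonneg E
  have hxd : ‖E‖ * ‖D‖ ≤ 1.11242 * 0.0398 :=
    mul_le_mul hxnum hdnum hd0 (by norm_num)
  have hdx : ‖D‖ * ‖E‖ ≤ 0.0398 * 1.11242 :=
    mul_le_mul hdnum hxnum hx0 (by norm_num)
  have hdd : ‖D‖ * ‖D‖ ≤ 0.0398 * 0.0398 :=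
    mul_le_mul hdnum hdnum hd0 (by norm_num)
  have hz0 : (0:ℝ) ≤ ‖z‖ := norm_nonneg z
  have hEE2 : ‖E * E - E‖ ≤ 2 * η := by
    refine hEEn.trans ?_; nlinarith only [hw14, hη]
  have hmid : ‖z‖ * ‖E * D + D * E - D‖ ≤ 1.11242 * 0.0398 + 0.0398 * 1.11242 + 0.0398 := by
    have hmid1 : ‖E * D + D * E - D‖ ≤ 1.11242 * 0.0398 + 0.0398 * 1.11242 + 0.0398 := by
      refine t2.trans ?_; linarith only [hxd, hdx, hdnum]
    calc ‖z‖ * ‖E * D + D * E - D‖ ≤ 1 * ‖E * D + D * E - D‖ :=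
          mul_le_mul_of_nonneg_right hzn (norm_nonneg _)
      _ = ‖E * D + D * E - D‖ := one_mul _
      _ ≤ _ := hmid1
  have hlast : (‖z‖ * ‖z‖) * ‖D * D‖ ≤ 0.0398 * 0.0398 := by
    have hzz : ‖z‖ * ‖z‖ ≤ 1 := by nlinarith only [hzn, hz0]
    have hDD0 : (0:ℝ) ≤ ‖D * D‖ := norm_nonneg _
    calc (‖z‖ * ‖z‖) * ‖D * D‖ ≤ 1 * ‖D * D‖ := mul_le_mul_of_nonneg_right hzz hDD0
      _ = ‖D * D‖ := one_mul _
      _ ≤ ‖D‖ * ‖D‖ := t3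
      _ ≤ 0.0398 * 0.0398 := hdd
  refine lt_of_le_of_lt (t1.trans (by linarith : ‖E * E - E‖ + ‖z‖ * ‖E * D + D * E - D‖
      + (‖z‖ * ‖z‖) * ‖D * D‖ ≤ 2 * η + (1.11242 * 0.0398 + 0.0398 * 1.11242 + 0.0398)
      + 0.0398 * 0.0398)) ?_
  linarith only [hηb]
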